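/- Let φ : ℝ^n → (−∞,∞] be proper, closed, and convex, let α > 0, x, v ∈ ℝ^n, and let A₁,…,A_b with A_i ∈ ℝ^{m_i×n} be given. For i = 1,…,b let g_i : ℝ^{m_i} → (−∞,∞] be proper, closed, μ*-strongly convex on dom(g_i) (μ* > 0), and differentiable on the nonempty open set D_i := int(dom(g_i)). For ξ = (ξ₁,…,ξ_b) define z(ξ) := x − (α/b)∑_{i=1}^b A_iᵀξ_i + v and U(ξ) := ∑_{i=1}^b g_i(ξ_i) + (b/(2α))‖z(ξ)‖² − (b/α)·env_{αφ}(z(ξ)). Then U is μ*-strongly convex on the set E := ∏_{i=1}^b dom(g_i), U is differentiable on D := ∏_{i=1}^b D_i, and for every ξ ∈ D the block components of its gradient are ∇_{ξ_i} U(ξ) = ∇g_i(ξ_i) − A_i · prox_{αφ}(z(ξ)). -/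

import Mathlib

open scoped RealInnerProductSpace

/-- The Moreau envelope `env_{αφ}(x) = min_{z ∈ D} (α φ z + ½‖x − z‖²)` of the proper
closed convex function with domain `D` and real values `φ` on `D`.  (Equivalently,
`α · min_z (φ z + (1/(2α))‖x − z‖²)`.) -/
noncomputable def moreauEnv {n : ℕ} (α : ℝ) (D : Set (EuclideanSpace ℝ (Fin n)))
    (φ : EuclideanSpace ℝ (Fin n) → ℝ) (x : EuclideanSpace ℝ (Fin n)) : ℝ :=
  sInf ((fun z => α * φ z + ‖x - z‖ ^ 2 / 2) '' D)

section Aux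

variable {n : ℕ} {α : ℝ} {Dφ : Set (EuclideanSpace ℝ (Fin n))}
  {φ : EuclideanSpace ℝ (Fin n) → ℝ}
  {P : EuclideanSpace ℝ (Fin n) → EuclideanSpace ℝ (Fin n)}

lemma aux_env_eq
    (hP : ∀ y, P y ∈ Dφ ∧ ∀ u ∈ Dφ,
      α * φ (P y) + ‖y - P y‖ ^ 2 / 2 ≤ α * φ u + ‖y - u‖ ^ 2 / 2)
    (y : EuclideanSpace ℝ (Fin n)) :
    moreauEnv α Dφ φ y = α * φ (P y) + ‖y - P y‖ ^ 2 / 2 := by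
  unfold moreauEnv
  apply le_antisymm
  · exact csInf_le ⟨_, fun r hr => by obtain ⟨u, hu, rfl⟩ := hr; exact (hP y).2 u hu⟩
      ⟨P y, (hP y).1, rfl⟩
  · exact le_csInf ⟨_, ⟨P y, (hP y).1, rfl⟩⟩
      (fun r hr => by obtain ⟨u, hu, rfl⟩ := hr; exact (hP y).2 u hu)

lemma aux_prox_lip (hα : 0 < α) (hconv : ConvexOn ℝ Dφ φ)
    (hP : ∀ y, P y ∈ Dφ ∧ ∀ u ∈ Dφ,
      α * φ (P y) + ‖y - P y‖ ^ 2 / 2 ≤ α * φ u + ‖y - u‖ ^ 2 / 2)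
    (y w : EuclideanSpace ℝ (Fin n)) :
    ‖P w - P y‖ ≤ 2 * ‖w - y‖ := by
  set u := P y with hu
  set u' := P w with hu'
  set mm := (1/2 : ℝ) • u + (1/2 : ℝ) • u' with hmm
  have hm : mm ∈ Dφ := hconv.1 (hP y).1 (hP w).1 (by norm_num) (by norm_num) (by norm_num)
  have hφm : φ mm ≤ (1/2 : ℝ) * φ u + (1/2 : ℝ) * φ u' :=
    hconv.2 (hP y).1 (hP w).1 (by norm_num) (by norm_num) (by norm_num)
  have i1 : α * φ u + ‖y - u‖ ^ 2 / 2 ≤ α * φ mm + ‖y - mm‖ ^ 2 / 2 := (hP y).2 mm hm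
  have i2 : α * φ u' + ‖w - u'‖ ^ 2 / 2 ≤ α * φ mm + ‖w - mm‖ ^ 2 / 2 := (hP w).2 mm hm
  have hφm' := mul_le_mul_of_nonneg_left hφm hα.le
  have hsum : ‖y - u‖ ^ 2 + ‖w - u'‖ ^ 2 ≤ ‖y - mm‖ ^ 2 + ‖w - mm‖ ^ 2 := by nlinarith
  have e1 : y - mm = (y - u) - (1/2 : ℝ) • (u' - u) := by
    rw [hmm]; module
  have e2 : w - mm = (w - u') + (1/2 : ℝ) • (u' - u) := by
    rw [hmm]; module
  have n1 : ‖y - mm‖ ^ 2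
      = ‖y - u‖ ^ 2 - ⟪y - u, u' - u⟫ + (1/4 : ℝ) * ‖u' - u‖ ^ 2 := by
    rw [e1, norm_sub_sq_real, real_inner_smul_right, norm_smul]
    simp; ring
  have n2 : ‖w - mm‖ ^ 2
      = ‖w - u'‖ ^ 2 + ⟪w - u', u' - u⟫ + (1/4 : ℝ) * ‖u' - u‖ ^ 2 := by
    rw [e2, norm_add_sq_real, real_inner_smul_right, norm_smul]
    simp; ring
  have hkey : ‖u' - u‖ ^ 2 ≤ 2 * ⟪w - y, u' - u⟫ := by
    have expand : ⟪w - u', u' - u⟫ - ⟪y - u, u' - u⟫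
        = ⟪w - y, u' - u⟫ - ‖u' - u‖ ^ 2 := by
      rw [show w - u' = (w - y) + (y - u) - (u' - u) by abel]
      rw [inner_sub_left, inner_add_left, real_inner_self_eq_norm_sq]
      ring
    nlinarith
  have hcs := real_inner_le_norm (w - y) (u' - u)
  rcases eq_or_lt_of_le (norm_nonneg (u' - u)) with h0 | h0
  · rw [← h0]; positivity
  · nlinarith

lemma aux_env_upper
    (hP : ∀ y, P y ∈ Dφ ∧ ∀ u ∈ Dφ,
      α * φ (P y) + ‖y - P y‖ ^ 2 / 2 ≤ α * φ u + ‖y - u‖ ^ 2 / 2)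
    (y w : EuclideanSpace ℝ (Fin n)) :
    moreauEnv α Dφ φ w ≤ moreauEnv α Dφ φ y + ⟪y - P y, w - y⟫ + ‖w - y‖ ^ 2 / 2 := by
  have h1 : moreauEnv α Dφ φ w ≤ α * φ (P y) + ‖w - P y‖ ^ 2 / 2 := by
    rw [aux_env_eq hP w]; exact (hP w).2 (P y) (hP y).1
  rw [aux_env_eq hP y]
  have e : ‖w - P y‖ ^ 2 = ‖y - P y‖ ^ 2 + 2 * ⟪y - P y, w - y⟫ + ‖w - y‖ ^ 2 := by
    rw [show w - P y = (y - P y) + (w - y) by abel, norm_add_sq_real]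
  linarith

lemma aux_env_lower (hα : 0 < α) (hconv : ConvexOn ℝ Dφ φ)
    (hP : ∀ y, P y ∈ Dφ ∧ ∀ u ∈ Dφ,
      α * φ (P y) + ‖y - P y‖ ^ 2 / 2 ≤ α * φ u + ‖y - u‖ ^ 2 / 2)
    (y w : EuclideanSpace ℝ (Fin n)) :
    moreauEnv α Dφ φ y + ⟪y - P y, w - y⟫ - 2 * ‖w - y‖ ^ 2 ≤ moreauEnv α Dφ φ w := by
  have h1 : moreauEnv α Dφ φ y ≤ α * φ (P w) + ‖y - P w‖ ^ 2 / 2 := by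
    rw [aux_env_eq hP y]; exact (hP y).2 (P w) (hP w).1
  rw [aux_env_eq hP w]
  have e : ‖w - P w‖ ^ 2 = ‖y - P w‖ ^ 2 + 2 * ⟪y - P w, w - y⟫ + ‖w - y‖ ^ 2 := by
    rw [show w - P w = (y - P w) + (w - y) by abel, norm_add_sq_real]
  have e2 : ⟪y - P w, w - y⟫ = ⟪y - P y, w - y⟫ + ⟪P y - P w, w - y⟫ := by
    rw [← inner_add_left]; congr 1; abel
  have hlip := aux_prox_lip hα hconv hP y w
  have hcs : |⟪P y - P w, w - y⟫| ≤ ‖P y - P w‖ * ‖w - y‖ := abs_real_inner_le_norm _ _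
  have hn : ‖P y - P w‖ = ‖P w - P y‖ := norm_sub_rev _ _
  have h3 : ⟪P y - P w, w - y⟫ ≥ -(2 * ‖w - y‖ * ‖w - y‖) := by
    have := neg_abs_le (⟪P y - P w, w - y⟫)
    nlinarith [norm_nonneg (w - y)]
  nlinarith [sq_nonneg ‖w - y‖, norm_nonneg (w-y)]

lemma aux_env_grad (hα : 0 < α) (hconv : ConvexOn ℝ Dφ φ)
    (hP : ∀ y, P y ∈ Dφ ∧ ∀ u ∈ Dφ,
      α * φ (P y) + ‖y - P y‖ ^ 2 / 2 ≤ α * φ u + ‖y - u‖ ^ 2 / 2)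
    (y : EuclideanSpace ℝ (Fin n)) :
    HasGradientAt (moreauEnv α Dφ φ) (y - P y) y := by
  rw [hasGradientAt_iff_hasFDerivAt, hasFDerivAt_iff_isLittleO_nhds_zero]
  rw [Asymptotics.isLittleO_iff]
  intro c hc
  filter_upwards [Metric.ball_mem_nhds (0 : EuclideanSpace ℝ (Fin n))
    (show (0:ℝ) < c/4 by positivity)] with h hh
  rw [Metric.mem_ball, dist_zero_right] at hh
  have key : |moreauEnv α Dφ φ (y + h) - moreauEnv α Dφ φ y - ⟪y - P y, h⟫| ≤ 2 * ‖h‖ ^ 2 := by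
    have hu := aux_env_upper hP y (y + h)
    have hl := aux_env_lower hα hconv hP y (y + h)
    rw [show y + h - y = h by abel] at hu hl
    rw [abs_le]
    constructor <;> nlinarith [sq_nonneg ‖h‖]
  have : InnerProductSpace.toDual ℝ (EuclideanSpace ℝ (Fin n)) (y - P y) h = ⟪y - P y, h⟫ := rfl
  rw [Real.norm_eq_abs, this]
  calc |moreauEnv α Dφ φ (y + h) - moreauEnv α Dφ φ y - ⟪y - P y, h⟫|
      ≤ 2 * ‖h‖ ^ 2 := key
    _ ≤ c * ‖h‖ := by nlinarith [norm_nonneg h]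

lemma convexOn_univ_of_subgrad {E : Type*} [NormedAddCommGroup E] [InnerProductSpace ℝ E]
    {f : E → ℝ} {p : E → E} (h : ∀ y w, f y + ⟪p y, w - y⟫ ≤ f w) :
    ConvexOn ℝ Set.univ f := by
  refine ⟨convex_univ, fun a _ b _ ta tb hta htb htab => ?_⟩
  set c := ta • a + tb • b with hc
  have hz : ta • (a - c) + tb • (b - c) = (0 : E) := by
    have he : ta • (a - c) + tb • (b - c) = (ta • a + tb • b) - (ta + tb) • c := by
      rw [add_smul, smul_sub, smul_sub]; abel
    rw [he, htab, one_smul, hc, sub_self]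
  have hinner : ta * ⟪p c, a - c⟫ + tb * ⟪p c, b - c⟫ = 0 := by
    rw [← real_inner_smul_right, ← real_inner_smul_right, ← inner_add_right, hz,
      inner_zero_right]
  have h1 := mul_le_mul_of_nonneg_left (h c a) hta
  have h2 := mul_le_mul_of_nonneg_left (h c b) htb
  have : (ta + tb) * f c = f c := by rw [htab, one_mul]
  simp only [smul_eq_mul]
  nlinarith

lemma aux_M_convex (hα : 0 < α)
    (hP : ∀ y, P y ∈ Dφ ∧ ∀ u ∈ Dφ,
      α * φ (P y) + ‖y - P y‖ ^ 2 / 2 ≤ α * φ u + ‖y - u‖ ^ 2 / 2) :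
    ConvexOn ℝ Set.univ (fun y : EuclideanSpace ℝ (Fin n) =>
      ‖y‖ ^ 2 / 2 - moreauEnv α Dφ φ y) := by
  apply convexOn_univ_of_subgrad (p := P)
  intro y w
  have hu := aux_env_upper hP y w
  have e : ‖w‖ ^ 2 = ‖y‖ ^ 2 + 2 * ⟪y, w - y⟫ + ‖w - y‖ ^ 2 := by
    rw [show w = y + (w - y) by abel, norm_add_sq_real]
    congr 2 <;> rw [show y + (w - y) - y = w - y by abel]
  have e2 : ⟪y, w - y⟫ - ⟪y - P y, w - y⟫ = ⟪P y, w - y⟫ := by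
    rw [← inner_sub_left]; congr 1; abel
  nlinarith

end Aux

set_option maxHeartbeats 1000000 in
/-- **The dual objective of the SPP subproblem is a strongly convex gradient potential.**
Let `φ` be proper, closed and convex (domain `Dφ`, values `φ`, prox `P` at scale `α > 0`),
`x, v ∈ ℝⁿ`, `A_i : ℝⁿ → ℝ^{m_i}` linear, and for `i = 1,…,b` let `g_i` be proper,
closed, `μ*`-strongly convex on its domain `Dg i` and differentiable (gradient `g' i`) on
the nonempty open set `D_i = int (Dg i)`.  For `ξ = (ξ₁,…,ξ_b)` set
`z(ξ) := x − (α/b) ∑_i A_iᵀ ξ_i + v` and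
`U(ξ) := ∑_i g_i(ξ_i) + (b/(2α))‖z(ξ)‖² − (b/α)·env_{αφ}(z(ξ))`.  Then `U` is
`μ*`-strongly convex on `E = ∏_i Dg i`, differentiable on `D = ∏_i D_i`, and for `ξ ∈ D`
the gradient blocks are `∇_{ξ_i} U(ξ) = ∇g_i(ξ_i) − A_i (prox_{αφ}(z(ξ)))`. -/
theorem dual_objective_gradient (n b : ℕ) (hb : 0 < b) (α μst : ℝ)
    (hα : 0 < α) (hμst : 0 < μst)
    (md : Fin b → ℕ)
    (A : ∀ i : Fin b, EuclideanSpace ℝ (Fin n) →L[ℝ] EuclideanSpace ℝ (Fin (md i)))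
    (Dφ : Set (EuclideanSpace ℝ (Fin n))) (φ : EuclideanSpace ℝ (Fin n) → ℝ)
    (hDφ : Dφ.Nonempty) (hφconv : ConvexOn ℝ Dφ φ)
    (hφclosed : IsClosed {q : EuclideanSpace ℝ (Fin n) × ℝ | q.1 ∈ Dφ ∧ φ q.1 ≤ q.2})
    (P : EuclideanSpace ℝ (Fin n) → EuclideanSpace ℝ (Fin n))
    (hP : ∀ y, P y ∈ Dφ ∧ ∀ u ∈ Dφ,
      α * φ (P y) + ‖y - P y‖ ^ 2 / 2 ≤ α * φ u + ‖y - u‖ ^ 2 / 2)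
    (Dg : ∀ i : Fin b, Set (EuclideanSpace ℝ (Fin (md i))))
    (g : ∀ i : Fin b, EuclideanSpace ℝ (Fin (md i)) → ℝ)
    (g' : ∀ i : Fin b, EuclideanSpace ℝ (Fin (md i)) → EuclideanSpace ℝ (Fin (md i)))
    (hDg : ∀ i, (Dg i).Nonempty)
    (hgclosed : ∀ i,
      IsClosed {q : EuclideanSpace ℝ (Fin (md i)) × ℝ | q.1 ∈ Dg i ∧ g i q.1 ≤ q.2})
    (hgstrong : ∀ i, ConvexOn ℝ (Dg i) (fun ξ => g i ξ - μst / 2 * ‖ξ‖ ^ 2))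
    (hint : ∀ i, (interior (Dg i)).Nonempty)
    (hgdiff : ∀ i, ∀ ξ ∈ interior (Dg i), HasGradientAt (g i) (g' i ξ) ξ)
    (x v : EuclideanSpace ℝ (Fin n)) :
    ConvexOn ℝ
      {ξ : PiLp 2 (fun i : Fin b => EuclideanSpace ℝ (Fin (md i))) | ∀ i, ξ i ∈ Dg i}
      (fun ξ => (∑ i : Fin b, g i (ξ i)
          + ((b : ℝ) / (2 * α)) *
            ‖x - ((α / (b : ℝ)) • ∑ i : Fin b, (A i).adjoint (ξ i)) + v‖ ^ 2
          - ((b : ℝ) / α) *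
            moreauEnv α Dφ φ (x - ((α / (b : ℝ)) • ∑ i : Fin b, (A i).adjoint (ξ i)) + v))
        - μst / 2 * ‖ξ‖ ^ 2) ∧
    ∀ ξ : PiLp 2 (fun i : Fin b => EuclideanSpace ℝ (Fin (md i))),
      (∀ i, ξ i ∈ interior (Dg i)) →
      HasGradientAt
        (fun ζ : PiLp 2 (fun i : Fin b => EuclideanSpace ℝ (Fin (md i))) =>
          ∑ i : Fin b, g i (ζ i)
            + ((b : ℝ) / (2 * α)) *
              ‖x - ((α / (b : ℝ)) • ∑ i : Fin b, (A i).adjoint (ζ i)) + v‖ ^ 2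
            - ((b : ℝ) / α) *
              moreauEnv α Dφ φ (x - ((α / (b : ℝ)) • ∑ i : Fin b, (A i).adjoint (ζ i)) + v))
        ((WithLp.equiv 2 _).symm fun i =>
          g' i (ξ i) - A i (P (x - ((α / (b : ℝ)) • ∑ i : Fin b, (A i).adjoint (ξ i)) + v)))
        ξ := by
  classical
  have hbR : (0:ℝ) < (b:ℝ) := Nat.cast_pos.mpr hb
  have hαne : α ≠ 0 := ne_of_gt hα
  have hbne : (b:ℝ) ≠ 0 := ne_of_gt hbR
  set T : PiLp 2 (fun i : Fin b => EuclideanSpace ℝ (Fin (md i))) →L[ℝ]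
      EuclideanSpace ℝ (Fin n) :=
    ∑ i : Fin b, ((A i).adjoint).comp (PiLp.proj (𝕜 := ℝ) 2 (fun i : Fin b => EuclideanSpace ℝ (Fin (md i))) i) with hTdef
  have hT : ∀ ζ : PiLp 2 (fun i : Fin b => EuclideanSpace ℝ (Fin (md i))),
      (∑ i : Fin b, (A i).adjoint (ζ i)) = T ζ := by
    intro ζ
    simp [hTdef, ContinuousLinearMap.sum_apply]
  simp only [hT]
  have hC : Convex ℝ {ξ : PiLp 2 (fun i : Fin b => EuclideanSpace ℝ (Fin (md i))) |
      ∀ i, ξ i ∈ Dg i} := by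
    intro p hp q hq ta tb hta htb htab i
    exact (hgstrong i).1 (hp i) (hq i) hta htb htab
  constructor
  · -- convexity
    have hgi : ∀ i : Fin b, ConvexOn ℝ
        {ξ : PiLp 2 (fun i : Fin b => EuclideanSpace ℝ (Fin (md i))) | ∀ j, ξ j ∈ Dg j}
        (fun ξ => g i (ξ i) - μst / 2 * ‖ξ i‖ ^ 2) := by
      intro i
      have h := (hgstrong i).comp_affineMap
        ((PiLp.proj (𝕜 := ℝ) 2 (fun i : Fin b => EuclideanSpace ℝ (Fin (md i))) i)
          |>.toLinearMap.toAffineMap)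
      exact h.subset (fun ξ hξ => hξ i) hC
    have hsum : ConvexOn ℝ
        {ξ : PiLp 2 (fun i : Fin b => EuclideanSpace ℝ (Fin (md i))) | ∀ j, ξ j ∈ Dg j}
        (fun ξ => ∑ i : Fin b, (g i (ξ i) - μst / 2 * ‖ξ i‖ ^ 2)) := by
      have h := Finset.sum_induction
        (fun i => (fun ξ : PiLp 2 (fun i : Fin b => EuclideanSpace ℝ (Fin (md i))) =>
          g i (ξ i) - μst / 2 * ‖ξ i‖ ^ 2))
        (fun h => ConvexOn ℝ {ξ : PiLp 2 (fun i : Fin b => EuclideanSpace ℝ (Fin (md i))) |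
          ∀ j, ξ j ∈ Dg j} h)
        (fun a b ha hb => ha.add hb)
        (by exact convexOn_const (0:ℝ) hC)
        (fun i (_ : i ∈ (Finset.univ : Finset (Fin b))) => hgi i)
      have he : (∑ i : Fin b, (fun ξ : PiLp 2 (fun i : Fin b => EuclideanSpace ℝ (Fin (md i))) =>
          g i (ξ i) - μst / 2 * ‖ξ i‖ ^ 2))
          = fun ξ => ∑ i : Fin b, (g i (ξ i) - μst / 2 * ‖ξ i‖ ^ 2) := by
        funext ξ; simp
      rwa [he] at h
    have hM := aux_M_convex (Dφ := Dφ) (φ := φ) (P := P) hα hP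
    have hcomp : ConvexOn ℝ Set.univ
        (fun ξ : PiLp 2 (fun i : Fin b => EuclideanSpace ℝ (Fin (md i))) =>
          ‖x - (α/(b:ℝ)) • T ξ + v‖ ^ 2 / 2
            - moreauEnv α Dφ φ (x - (α/(b:ℝ)) • T ξ + v)) := by
      refine ⟨convex_univ, fun p _ q _ ta tb hta htb htab => ?_⟩
      have haff : x - (α/(b:ℝ)) • T (ta • p + tb • q) + v
          = ta • (x - (α/(b:ℝ)) • T p + v) + tb • (x - (α/(b:ℝ)) • T q + v) := by
        rw [map_add, map_smul, map_smul]
        have h1 : ∀ u w : EuclideanSpace ℝ (Fin n),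
            ta • (x - (α/(b:ℝ)) • u + v) + tb • (x - (α/(b:ℝ)) • w + v)
              = (ta+tb) • x - (α/(b:ℝ)) • (ta • u + tb • w) + (ta+tb) • v := by
          intro u w; module
        rw [h1, htab, one_smul, one_smul]
      have h2 := hM.2 (Set.mem_univ (x - (α/(b:ℝ)) • T p + v))
        (Set.mem_univ (x - (α/(b:ℝ)) • T q + v)) hta htb htab
      simp only [smul_eq_mul] at h2 ⊢
      rw [haff]
      exact h2
    have hfeq : (fun ξ : PiLp 2 (fun i : Fin b => EuclideanSpace ℝ (Fin (md i))) =>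
        (∑ i : Fin b, g i (ξ i)
          + ((b : ℝ) / (2 * α)) * ‖x - ((α / (b : ℝ)) • T ξ) + v‖ ^ 2
          - ((b : ℝ) / α) * moreauEnv α Dφ φ (x - ((α / (b : ℝ)) • T ξ) + v))
          - μst / 2 * ‖ξ‖ ^ 2)
        = fun ξ => (∑ i : Fin b, (g i (ξ i) - μst / 2 * ‖ξ i‖ ^ 2))
          + ((b:ℝ)/α) • (‖x - (α/(b:ℝ)) • T ξ + v‖ ^ 2 / 2
            - moreauEnv α Dφ φ (x - (α/(b:ℝ)) • T ξ + v)) := by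
      funext ξ
      rw [PiLp.norm_sq_eq_of_L2 (fun i : Fin b => EuclideanSpace ℝ (Fin (md i))) ξ,
        Finset.sum_sub_distrib, ← Finset.mul_sum, smul_eq_mul]
      set NN := ‖x - (α/(b:ℝ)) • T ξ + v‖ ^ 2 with hNN
      set EE := moreauEnv α Dφ φ (x - (α/(b:ℝ)) • T ξ + v) with hEE
      set S1 := ∑ i : Fin b, g i (ξ i) with hS1
      set S2 := ∑ i : Fin b, ‖ξ i‖ ^ 2 with hS2
      clear_value NN EE S1 S2
      field_simp
      ring
    rw [hfeq]
    exact hsum.add (ConvexOn.smul (by positivity)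
      (hcomp.subset (Set.subset_univ _) hC))
  · -- gradient
    intro ξ hξ
    have hzd : HasFDerivAt
        (fun ζ : PiLp 2 (fun i : Fin b => EuclideanSpace ℝ (Fin (md i))) =>
          x - (α/(b:ℝ)) • T ζ + v)
        ((0 : _ →L[ℝ] _) - (α/(b:ℝ)) • T) ξ :=
      ((hasFDerivAt_const x ξ).sub ((T.hasFDerivAt).const_smul (α/(b:ℝ)))).add_const v
    have h1 : HasFDerivAt
        (fun ζ : PiLp 2 (fun i : Fin b => EuclideanSpace ℝ (Fin (md i))) =>
          ∑ i : Fin b, g i (ζ i))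
        (∑ i : Fin b, (InnerProductSpace.toDual ℝ (EuclideanSpace ℝ (Fin (md i))) (g' i (ξ i))).comp
          (PiLp.proj (𝕜 := ℝ) 2 (fun i : Fin b => EuclideanSpace ℝ (Fin (md i))) i)) ξ := by
      apply HasFDerivAt.fun_sum
      intro i _
      exact ((hgdiff i (ξ i) (hξ i)).hasFDerivAt).comp ξ
        (PiLp.proj (𝕜 := ℝ) 2 (fun i : Fin b => EuclideanSpace ℝ (Fin (md i))) i).hasFDerivAt
    have h2 : HasFDerivAt
        (fun ζ : PiLp 2 (fun i : Fin b => EuclideanSpace ℝ (Fin (md i))) =>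
          ‖x - (α/(b:ℝ)) • T ζ + v‖ ^ 2)
        (2 • (innerSL ℝ (x - (α/(b:ℝ)) • T ξ + v)).comp
          ((0 : _ →L[ℝ] _) - (α/(b:ℝ)) • T)) ξ := hzd.norm_sq
    have h3 : HasFDerivAt
        (fun ζ : PiLp 2 (fun i : Fin b => EuclideanSpace ℝ (Fin (md i))) =>
          moreauEnv α Dφ φ (x - (α/(b:ℝ)) • T ζ + v))
        ((InnerProductSpace.toDual ℝ _
            ((x - (α/(b:ℝ)) • T ξ + v) - P (x - (α/(b:ℝ)) • T ξ + v))).comp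
          ((0 : _ →L[ℝ] _) - (α/(b:ℝ)) • T)) ξ :=
      ((aux_env_grad hα hφconv hP (x - (α/(b:ℝ)) • T ξ + v)).hasFDerivAt).comp (g := moreauEnv α Dφ φ) ξ hzd
    have hD := (h1.add (h2.const_mul ((b:ℝ)/(2*α)))).sub (h3.const_mul ((b:ℝ)/α))
    rw [hasGradientAt_iff_hasFDerivAt]
    have hEq : ((∑ i : Fin b, (InnerProductSpace.toDual ℝ (EuclideanSpace ℝ (Fin (md i))) (g' i (ξ i))).comp
          (PiLp.proj (𝕜 := ℝ) 2 (fun i : Fin b => EuclideanSpace ℝ (Fin (md i))) i))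
        + ((b:ℝ)/(2*α)) • (2 • (innerSL ℝ (x - (α/(b:ℝ)) • T ξ + v)).comp
          ((0 : _ →L[ℝ] _) - (α/(b:ℝ)) • T))
        - ((b:ℝ)/α) • ((InnerProductSpace.toDual ℝ _
            ((x - (α/(b:ℝ)) • T ξ + v) - P (x - (α/(b:ℝ)) • T ξ + v))).comp
          ((0 : _ →L[ℝ] _) - (α/(b:ℝ)) • T)))
        = InnerProductSpace.toDual ℝ _
          ((WithLp.equiv 2 _).symm fun i =>
            g' i (ξ i) - A i (P (x - ((α / (b : ℝ)) • T ξ) + v))) := by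
      apply ContinuousLinearMap.ext
      intro η
      have hTval : ∀ w : EuclideanSpace ℝ (Fin n),
          ⟪w, T η⟫ = ∑ i : Fin b, ⟪A i w, η i⟫ := by
        intro w
        rw [← hT η, inner_sum]
        exact Finset.sum_congr rfl fun i _ =>
          ContinuousLinearMap.adjoint_inner_right _ _ _
      simp only [zero_sub, ContinuousLinearMap.add_apply, ContinuousLinearMap.sub_apply,
        ContinuousLinearMap.smul_apply, ContinuousLinearMap.sum_apply,
        ContinuousLinearMap.comp_apply, ContinuousLinearMap.neg_apply,
        PiLp.proj_apply, InnerProductSpace.toDual_apply_apply, innerSL_apply_apply, smul_eq_mul,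
        nsmul_eq_mul, inner_neg_right, real_inner_smul_right, Nat.cast_ofNat]
      conv_rhs => rw [PiLp.inner_apply]
      simp only [WithLp.equiv_symm_apply, WithLp.ofLp_toLp, inner_sub_left]
      rw [Finset.sum_sub_distrib]
      rw [hTval (x - (α / (b:ℝ)) • T ξ + v), hTval (P (x - (α / (b:ℝ)) • T ξ + v))]
      set s1 := ∑ i : Fin b, (⟪g' i (ξ i), η i⟫ : ℝ)
      set s2 := ∑ i : Fin b, (⟪A i (x - (α / (b:ℝ)) • T ξ + v), η i⟫ : ℝ)
      set s3 := ∑ i : Fin b, (⟪A i (P (x - (α / (b:ℝ)) • T ξ + v)), η i⟫ : ℝ)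
      clear_value s1 s2 s3
      field_simp
      ring
    rw [← hEq]
    exact hD
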